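/- Let n ≥ 3. Houghton's group H_n, defined as the set of permutations of X_n that are eventually translations on each ray, equals the subgroup of Sym(X_n) generated by the permutations g_2,…,g_n. -/

import Mathlib

namespace HoughtonPaper

/-- The set `X_n = {1,…,n} × ℕ` (rays indexed by `Fin n`). -/
abbrev X (n : ℕ) := Fin n × ℕ

/-- `g` acts as the translation by `t i` on the ray `i` from the point `z` on. -/
def EvTransFrom {n : ℕ} (g : Equiv.Perm (X n)) (t : Fin n → ℤ) (z : ℕ) : Prop :=
  ∀ (i : Fin n) (m : ℕ), z ≤ m →
    (g (i, m)).1 = i ∧ ((g (i, m)).2 : ℤ) = (m : ℤ) + t i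

/-- `g` is eventually a translation with translation vector `t`. -/
def EvTrans {n : ℕ} (g : Equiv.Perm (X n)) (t : Fin n → ℤ) : Prop :=
  ∃ z : ℕ, EvTransFrom g t z

/-- Membership in Houghton's group `H_n`. -/
def InH {n : ℕ} (g : Equiv.Perm (X n)) : Prop :=
  ∃ t : Fin n → ℤ, EvTrans g t

/-- Support of a permutation. -/
def supp {α : Type*} (g : Equiv.Perm α) : Set α := {x | g x ≠ x}

/-- Membership in `FSym(X_n)`, the finitely supported permutations. -/
def InFSym {n : ℕ} (g : Equiv.Perm (X n)) : Prop := (supp g).Finite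

/-- Two sets are almost equal if their symmetric difference is finite. -/
def AlmostEq {α : Type*} (A B : Set α) : Prop := (symmDiff A B).Finite

/-- The set `X_{i,r}(g) = {(i,m) : m ≡ r mod |t_i(g)|}`, for `t` the translation vector. -/
def Xir {n : ℕ} (i : Fin n) (t : Fin n → ℤ) (r : ℕ) : Set (X n) :=
  {p : X n | p.1 = i ∧ p.2 % (t i).natAbs = r}

/-- Forward orbit `{(i,m)g^k : k ≥ 0}`. -/
def fwdOrbit {n : ℕ} (g : Equiv.Perm (X n)) (p : X n) : Set (X n) :=
  Set.range fun k : ℕ => (g ^ k) p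

/-- The orbit `{x g^k : k ∈ ℤ}`. -/
def orbit {n : ℕ} (g : Equiv.Perm (X n)) (p : X n) : Set (X n) :=
  Set.range fun k : ℤ => (g ^ k) p

/-- `A` is an infinite orbit of `g`. -/
def IsInfOrbit {n : ℕ} (g : Equiv.Perm (X n)) (A : Set (X n)) : Prop :=
  (∃ p : X n, A = orbit g p) ∧ A.Infinite

/-- The generating relation of `∼_g`: some infinite orbit of `g` is almost equal
to `X_{i,r}(g) ∪ X_{j,s}(g)`. -/
def BaseRel {n : ℕ} (g : Equiv.Perm (X n)) (t : Fin n → ℤ) (i j : Fin n) : Prop :=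
  ∃ r s : ℕ, r < (t i).natAbs ∧ s < (t j).natAbs ∧
    ∃ A : Set (X n), IsInfOrbit g A ∧ AlmostEq A (Xir i t r ∪ Xir j t s)

/-- The equivalence relation `∼_g` on the rays, generated by `BaseRel`. -/
def SimRel {n : ℕ} (g : Equiv.Perm (X n)) (t : Fin n → ℤ) : Fin n → Fin n → Prop :=
  Relation.EqvGen (BaseRel g t)

def genFun {n : ℕ} [NeZero n] (i : Fin n) : X n → X n :=
  fun p =>
    if p.1 = 0 then ((0 : Fin n), p.2 + 1)
    else if p.1 = i then (if p.2 = 0 then ((0 : Fin n), 0) else (i, p.2 - 1))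
    else p

def genInvFun {n : ℕ} [NeZero n] (i : Fin n) : X n → X n :=
  fun p =>
    if p.1 = 0 then (if p.2 = 0 then (i, 0) else ((0 : Fin n), p.2 - 1))
    else if p.1 = i then (i, p.2 + 1)
    else p

/-- The generator `g_i` of Houghton's group (ray `1` of the paper is ray `0` here). -/
def gen {n : ℕ} [NeZero n] (i : Fin n) (hi : i ≠ 0) : Equiv.Perm (X n) where
  toFun := genFun i
  invFun := genInvFun i
  left_inv := by
    rintro ⟨j, m⟩
    by_cases hj : j = 0
    · subst hj
      simp [genFun, genInvFun]
    · by_cases hji : j = i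
      · subst hji
        rcases Nat.eq_zero_or_pos m with hm | hm
        · subst hm; simp [genFun, genInvFun, hi]
        · simp [genFun, genInvFun, hi, hm.ne', Nat.sub_add_cancel hm]
      · simp [genFun, genInvFun, hj, hji]
  right_inv := by
    rintro ⟨j, m⟩
    by_cases hj : j = 0
    · subst hj
      rcases Nat.eq_zero_or_pos m with hm | hm
      · subst hm; simp [genFun, genInvFun, hi]
      · simp [genFun, genInvFun, hm.ne', hi.symm, Nat.sub_add_cancel hm]
    · by_cases hji : j = i
      · subst hji
        simp [genFun, genInvFun, hj]
      · simp [genFun, genInvFun, hj, hji]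

/-- The transposition `τ` exchanging `(1,0)` and `(2,0)` (here `(0,0)` and `(1,0)`). -/
def tau (n : ℕ) [NeZero n] : Equiv.Perm (X n) :=
  Equiv.swap ((0 : Fin n), 0) ((1 : Fin n), 0)

/-- Letters of the alphabet `{g_2,…,g_n}^{±1}`. -/
abbrev Letter (n : ℕ) [NeZero n] := {i : Fin n // i ≠ 0} × Bool

/-- Words over `{g_2,…,g_n}^{±1}`. -/
abbrev Word (n : ℕ) [NeZero n] := List (Letter n)

def evalLetter {n : ℕ} [NeZero n] (l : Letter n) : Equiv.Perm (X n) :=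
  if l.2 then gen l.1.1 l.1.2 else (gen l.1.1 l.1.2)⁻¹

/-- The element of `Sym(X_n)` represented by a word. -/
def wordProd {n : ℕ} [NeZero n] (w : Word n) : Equiv.Perm (X n) :=
  (w.map evalLetter).prod

section Proof

variable {n : ℕ} [NeZero n]

/-- The subgroup generated by the `gen i`. -/
def Cl (n : ℕ) [NeZero n] : Subgroup (Equiv.Perm (X n)) :=
  Subgroup.closure {h : Equiv.Perm (X n) | ∃ (i : Fin n) (hi : i ≠ 0), h = gen i hi}

lemma gen_mem (i : Fin n) (hi : i ≠ 0) : gen i hi ∈ Cl n :=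
  Subgroup.subset_closure ⟨i, hi, rfl⟩

lemma gen_apply (i : Fin n) (hi : i ≠ 0) (p : X n) : gen i hi p = genFun i p := rfl

lemma gen_inv_apply (i : Fin n) (hi : i ≠ 0) (p : X n) : (gen i hi)⁻¹ p = genInvFun i p := rfl

/-- Translation vector of `gen j`. -/
def vec {n : ℕ} [NeZero n] (j : Fin n) : Fin n → ℤ := fun i => if i = 0 then 1 else if i = j then -1 else 0

lemma evt_one : EvTransFrom (1 : Equiv.Perm (X n)) 0 0 := by
  intro i m _
  simp

lemma evt_mul {g h : Equiv.Perm (X n)} {t s : Fin n → ℤ} {z1 z2 : ℕ}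
    (hg : EvTransFrom g t z1) (hh : EvTransFrom h s z2) :
    EvTransFrom (g * h) (t + s) (z1 + z2 + ∑ i, (s i).natAbs) := by
  intro i m hm
  have hS : (s i).natAbs ≤ ∑ j, (s j).natAbs :=
    Finset.single_le_sum (f := fun j => (s j).natAbs) (fun j _ => Nat.zero_le _)
      (Finset.mem_univ i)
  obtain ⟨h1, h2⟩ := hh i m (by omega)
  have hh' : h (i, m) = (i, (h (i, m)).2) := Prod.ext h1 rfl
  have hz1 : z1 ≤ (h (i, m)).2 := by omega
  obtain ⟨g1, g2⟩ := hg i ((h (i, m)).2) hz1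
  rw [Equiv.Perm.mul_apply, hh']
  refine ⟨g1, ?_⟩
  rw [g2]
  simp only [Pi.add_apply]
  omega

lemma evt_inv {g : Equiv.Perm (X n)} {t : Fin n → ℤ} {z : ℕ}
    (hg : EvTransFrom g t z) : EvTransFrom g⁻¹ (-t) (z + ∑ i, (t i).natAbs) := by
  intro i m hm
  have hS : (t i).natAbs ≤ ∑ j, (t j).natAbs :=
    Finset.single_le_sum (f := fun j => (t j).natAbs) (fun j _ => Nat.zero_le _)
      (Finset.mem_univ i)
  set m' := ((m : ℤ) - t i).toNat with hm'def
  have hm'' : (m' : ℤ) = (m : ℤ) - t i := Int.toNat_of_nonneg (by omega)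
  obtain ⟨g1, g2⟩ := hg i m' (by omega)
  have hsnd : (g (i, m')).2 = m := by omega
  have hgm : g (i, m') = (i, m) := Prod.ext g1 hsnd
  have hginv : g⁻¹ (i, m) = (i, m') := by
    rw [← hgm]; exact g.symm_apply_apply _
  rw [hginv]
  refine ⟨rfl, ?_⟩
  simp only [Pi.neg_apply]
  omega

lemma evt_gen (i : Fin n) (hi : i ≠ 0) : EvTransFrom (gen i hi) (vec i) 1 := by
  intro j m hm
  rw [gen_apply]
  by_cases hj0 : j = 0
  · subst hj0
    have hg : genFun i ((0 : Fin n), m) = ((0 : Fin n), m + 1) := by simp [genFun]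
    rw [hg]
    refine ⟨rfl, ?_⟩
    have hv : vec i (0 : Fin n) = 1 := by simp [vec]
    rw [hv]
    show ((m + 1 : ℕ) : ℤ) = (m : ℤ) + 1
    omega
  · by_cases hji : j = i
    · subst hji
      have hg : genFun j (j, m) = (j, m - 1) := by
        simp only [genFun, if_neg hj0, if_pos rfl, if_true, eq_self_iff_true,
          if_neg (by omega : ¬m = 0)]
      rw [hg]
      refine ⟨rfl, ?_⟩
      have hv : vec j j = -1 := by simp [vec, hj0]
      rw [hv]
      show ((m - 1 : ℕ) : ℤ) = (m : ℤ) + -1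
      omega
    · have hg : genFun i (j, m) = (j, m) := by simp [genFun, hj0, hji]
      rw [hg]
      refine ⟨rfl, ?_⟩
      have hv : vec i j = 0 := by simp [vec, hj0, hji]
      rw [hv]
      omega

/-- `InH` as a subgroup. -/
def Hsub (n : ℕ) [NeZero n] : Subgroup (Equiv.Perm (X n)) where
  carrier := {g | InH g}
  one_mem' := ⟨0, 0, evt_one⟩
  mul_mem' := by
    rintro a b ⟨t, z1, ha⟩ ⟨s, z2, hb⟩
    exact ⟨t + s, _, evt_mul ha hb⟩
  inv_mem' := by
    rintro a ⟨t, z1, ha⟩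
    exact ⟨-t, _, evt_inv ha⟩

/-- The counting argument: a permutation which is eventually a translation
with vanishing translation on all rays but ray `0` also has vanishing
translation on ray `0`. -/
lemma v_zero_of_others_zero {h : Equiv.Perm (X n)} {v : Fin n → ℤ} {z : ℕ}
    (hev : EvTransFrom h v z) (hv : ∀ j : Fin n, j ≠ 0 → v j = 0) : v 0 = 0 := by
  classical
  have hpos : 0 ≤ (z : ℤ) + v 0 := by
    obtain ⟨-, e⟩ := hev 0 z le_rfl
    omega
  set w := ((z : ℤ) + v 0).toNat with hwdef
  have hw : (w : ℤ) = (z : ℤ) + v 0 := Int.toNat_of_nonneg hpos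
  have hfix : ∀ j : Fin n, j ≠ 0 → ∀ m, z ≤ m → h (j, m) = (j, m) := by
    intro j hj m hm
    obtain ⟨e1, e2⟩ := hev j m hm
    rw [hv j hj] at e2
    exact Prod.ext e1 (by omega)
  have h0ray : ∀ m, z ≤ m → h ((0 : Fin n), m) = (0, (h ((0 : Fin n), m)).2) ∧
      (((h ((0 : Fin n), m)).2 : ℤ)) = (m : ℤ) + v 0 := by
    intro m hm
    obtain ⟨e1, e2⟩ := hev 0 m hm
    exact ⟨Prod.ext e1 rfl, e2⟩
  set B : Finset (X n) := Finset.univ ×ˢ Finset.range z with hB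
  set R : Finset (X n) := ((Finset.univ.erase (0 : Fin n)) ×ˢ Finset.range z) ∪
      (({(0 : Fin n)} : Finset (Fin n)) ×ˢ Finset.range w) with hR
  have himg : B.image (h : X n → X n) = R := by
    ext ⟨j, m⟩
    simp only [hB, hR, Finset.mem_image, Finset.mem_product, Finset.mem_union,
      Finset.mem_erase, Finset.mem_univ, Finset.mem_singleton, Finset.mem_range, true_and,
      and_true]
    constructor
    · rintro ⟨⟨b1, b2⟩, hb2, heq⟩
      by_cases hj : j = 0
      · subst hj
        right
        refine ⟨rfl, ?_⟩
        by_contra hge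
        push_neg at hge
        have hmz : 0 ≤ (m : ℤ) - v 0 := by omega
        set m2 := ((m : ℤ) - v 0).toNat with hm2def
        have hm2 : (m2 : ℤ) = (m : ℤ) - v 0 := Int.toNat_of_nonneg hmz
        have hz2 : z ≤ m2 := by omega
        obtain ⟨e, e2⟩ := h0ray m2 hz2
        have hval : (h ((0 : Fin n), m2)).2 = m := by omega
        rw [hval] at e
        have hbm : ((b1, b2) : X n) = ((0 : Fin n), m2) := h.injective (heq.trans e.symm)
        have : b2 = m2 := congrArg Prod.snd hbm
        omega
      · left
        refine ⟨hj, ?_⟩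
        by_contra hge
        push_neg at hge
        have he := hfix j hj m hge
        have hbm : ((b1, b2) : X n) = ((j : Fin n), m) := h.injective (heq.trans he.symm)
        have : b2 = m := congrArg Prod.snd hbm
        omega
    · have hb : h (h⁻¹ ((j : Fin n), m)) = (j, m) := h.apply_symm_apply _
      rintro (⟨hj, hm⟩ | ⟨hj, hm⟩)
      · refine ⟨h⁻¹ (j, m), ?_, hb⟩
        by_contra hbz
        push_neg at hbz
        by_cases hb1 : (h⁻¹ ((j : Fin n), m)).1 = 0
        · have hEq : h⁻¹ ((j : Fin n), m) = ((0 : Fin n), (h⁻¹ ((j : Fin n), m)).2) :=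
            Prod.ext hb1 rfl
          obtain ⟨e, -⟩ := h0ray (h⁻¹ ((j : Fin n), m)).2 hbz
          rw [hEq, e] at hb
          exact hj (congrArg Prod.fst hb.symm)
        · have he := hfix _ hb1 _ hbz
          rw [show ((h⁻¹ ((j:Fin n), m)).1, (h⁻¹ ((j:Fin n), m)).2) = h⁻¹ ((j:Fin n), m)
            from rfl] at he
          rw [he] at hb
          have : m = (h⁻¹ ((j : Fin n), m)).2 := (congrArg Prod.snd hb).symm
          omega
      · subst hj
        refine ⟨h⁻¹ ((0 : Fin n), m), ?_, hb⟩
        by_contra hbz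
        push_neg at hbz
        by_cases hb1 : (h⁻¹ ((0 : Fin n), m)).1 = 0
        · have hEq : h⁻¹ ((0 : Fin n), m) = ((0 : Fin n), (h⁻¹ ((0 : Fin n), m)).2) :=
            Prod.ext hb1 rfl
          obtain ⟨e, e2⟩ := h0ray (h⁻¹ ((0 : Fin n), m)).2 hbz
          rw [hEq, e] at hb
          have : (h ((0:Fin n), (h⁻¹ ((0:Fin n), m)).2)).2 = m := congrArg Prod.snd hb
          omega
        · have he := hfix _ hb1 _ hbz
          rw [show ((h⁻¹ ((0:Fin n), m)).1, (h⁻¹ ((0:Fin n), m)).2) = h⁻¹ ((0:Fin n), m)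
            from rfl] at he
          rw [he] at hb
          exact hb1 (congrArg Prod.fst hb)
  have hcardB : B.card = n * z := by
    simp [hB]
  have hdisj : Disjoint ((Finset.univ.erase (0 : Fin n)) ×ˢ Finset.range z)
      (({(0 : Fin n)} : Finset (Fin n)) ×ˢ Finset.range w) := by
    rw [Finset.disjoint_left]
    rintro ⟨a, b⟩ ha hb
    simp only [Finset.mem_product, Finset.mem_erase, Finset.mem_singleton] at ha hb
    exact ha.1.1 hb.1
  have hcardR : R.card = (n - 1) * z + w := by
    rw [hR, Finset.card_union_of_disjoint hdisj]
    simp [Finset.card_product, Finset.card_erase_of_mem]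
  have hkey : n * z = (n - 1) * z + w := by
    rw [← hcardB, ← Finset.card_image_of_injective B h.injective, himg, hcardR]
  have hn1 : 1 ≤ n := Nat.one_le_iff_ne_zero.mpr (NeZero.ne n)
  obtain ⟨k, rfl⟩ : ∃ k, n = k + 1 := ⟨n - 1, by omega⟩
  have hmul : (k + 1) * z = k * z + z := by ring
  have hsub : (k + 1) - 1 = k := by omega
  rw [hsub, hmul] at hkey
  have hwz : z = w := by omega
  omega

lemma swap_mem_conj {p q : X n} (σ : Equiv.Perm (X n)) (hσ : σ ∈ Cl n)
    (hpq : Equiv.swap p q ∈ Cl n) : Equiv.swap (σ p) (σ q) ∈ Cl n := by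
  rw [Equiv.swap_apply_apply]
  exact mul_mem (mul_mem hσ hpq) (inv_mem hσ)

lemma swap_base {i j : Fin n} (hi : i ≠ 0) (hj : j ≠ 0) (hij : i ≠ j) :
    Equiv.swap (((0 : Fin n), (0 : ℕ)) : X n) ((i, 0) : X n) =
      (gen i hi)⁻¹ * gen j hj * gen i hi * (gen j hj)⁻¹ := by
  apply Equiv.ext
  rintro ⟨r, m⟩
  simp only [Equiv.Perm.mul_apply, gen_apply, gen_inv_apply]
  by_cases hr0 : r = 0
  · subst hr0
    rcases m with - | m
    · rw [Equiv.swap_apply_left]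
      simp [genFun, genInvFun, hi, hj, hij, Ne.symm hij]
    · rw [Equiv.swap_apply_of_ne_of_ne (by simp) (by simp [Ne.symm hi])]
      simp [genFun, genInvFun, hi, hj, hij, Ne.symm hij]
  · by_cases hri : r = i
    · subst hri
      rcases m with - | m
      · rw [Equiv.swap_apply_right]
        simp [genFun, genInvFun, hi, hj, hij, Ne.symm hij]
      · rw [Equiv.swap_apply_of_ne_of_ne (by simp [hi]) (by simp)]
        simp [genFun, genInvFun, hi, hj, hij, Ne.symm hij]
    · by_cases hrj : r = j
      · subst hrj
        rw [Equiv.swap_apply_of_ne_of_ne (by simp [hj]) (by simp [Ne.symm hij])]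
        simp [genFun, genInvFun, hi, hj, hij, Ne.symm hij]
      · rw [Equiv.swap_apply_of_ne_of_ne (by simp [hr0]) (by simp [hri])]
        simp [genFun, genInvFun, hr0, hri, hrj]

lemma swap_zero_j (hn : 3 ≤ n) {j : Fin n} (hj : j ≠ 0) :
    Equiv.swap (((0 : Fin n), (0 : ℕ)) : X n) ((j, 0) : X n) ∈ Cl n := by
  obtain ⟨k, hk0, hkj⟩ : ∃ k : Fin n, k ≠ 0 ∧ j ≠ k := by
    by_cases h1 : j = ⟨1, by omega⟩
    · exact ⟨⟨2, by omega⟩, by simp [Fin.ext_iff], by simp [h1, Fin.ext_iff]⟩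
    · exact ⟨⟨1, by omega⟩, by simp [Fin.ext_iff], h1⟩
  rw [swap_base hj hk0 hkj]
  exact mul_mem (mul_mem (mul_mem (inv_mem (gen_mem _ _)) (gen_mem _ _)) (gen_mem _ _))
    (inv_mem (gen_mem _ _))

lemma swap_ray (hn : 3 ≤ n) {j : Fin n} (hj : j ≠ 0) (k : ℕ) :
    Equiv.swap ((j, k) : X n) ((j, k + 1) : X n) ∈ Cl n := by
  induction k with
  | zero =>
    have h := swap_mem_conj ((gen j hj)⁻¹) (inv_mem (gen_mem _ _)) (swap_zero_j hn hj)
    simpa [gen_inv_apply, genInvFun, hj] using h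
  | succ k ih =>
    have h := swap_mem_conj ((gen j hj)⁻¹) (inv_mem (gen_mem _ _)) ih
    simpa [gen_inv_apply, genInvFun, hj] using h

lemma swap_ray0 (hn : 3 ≤ n) (k : ℕ) :
    Equiv.swap (((0 : Fin n), k) : X n) (((0 : Fin n), k + 1) : X n) ∈ Cl n := by
  have hj : (⟨1, by omega⟩ : Fin n) ≠ 0 := by simp [Fin.ext_iff]
  induction k with
  | zero =>
    have h := swap_mem_conj (gen _ hj) (gen_mem _ _) (swap_zero_j hn hj)
    rw [Equiv.swap_comm]
    simpa [gen_apply, genFun, hj] using h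
  | succ k ih =>
    have h := swap_mem_conj (gen _ hj) (gen_mem _ _) ih
    simpa [gen_apply, genFun, hj] using h

lemma swap_zero_any (hn : 3 ≤ n) (p : X n) (hp : p ≠ ((0 : Fin n), (0 : ℕ))) :
    Equiv.swap (((0 : Fin n), (0 : ℕ)) : X n) p ∈ Cl n := by
  obtain ⟨j, m⟩ := p
  induction m with
  | zero =>
    have hj : j ≠ 0 := by
      rintro rfl
      exact hp rfl
    exact swap_zero_j hn hj
  | succ m ih =>
    by_cases hjm : ((j, m) : X n) = ((0 : Fin n), (0 : ℕ))
    · simp only [Prod.mk.injEq] at hjm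
      obtain ⟨rfl, rfl⟩ := hjm
      exact swap_ray0 hn 0
    · have h1 := ih hjm
      have hray : Equiv.swap ((j, m) : X n) ((j, m + 1) : X n) ∈ Cl n := by
        by_cases hj : j = 0
        · subst hj; exact swap_ray0 hn m
        · exact swap_ray hn hj m
      have key := Equiv.swap_mul_swap_mul_swap
        (x := (((0 : Fin n), (0 : ℕ)) : X n)) (y := ((j, m) : X n)) (z := ((j, m + 1) : X n))
        (Ne.symm hjm) (fun hc => Nat.succ_ne_zero m (congrArg Prod.snd hc).symm)
      rw [Equiv.swap_comm, ← key]
      exact mul_mem (mul_mem hray h1) hray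

lemma swap_mem (hn : 3 ≤ n) {p q : X n} (hpq : p ≠ q) : Equiv.swap p q ∈ Cl n := by
  by_cases hp : p = ((0 : Fin n), (0 : ℕ))
  · subst hp
    exact swap_zero_any hn q (Ne.symm hpq)
  · by_cases hq : q = ((0 : Fin n), (0 : ℕ))
    · subst hq
      rw [Equiv.swap_comm]
      exact swap_zero_any hn p hp
    · have key := Equiv.swap_mul_swap_mul_swap
        (x := q) (y := (((0 : Fin n), (0 : ℕ)) : X n)) (z := p) hq (Ne.symm hpq)
      rw [← key]
      have h1 := swap_zero_any hn p hp
      have h2 : Equiv.swap q (((0 : Fin n), (0 : ℕ)) : X n) ∈ Cl n := by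
        rw [Equiv.swap_comm]
        exact swap_zero_any hn q hq
      exact mul_mem (mul_mem h1 h2) h1

lemma fsym_mem (hn : 3 ≤ n) :
    ∀ (k : ℕ) (g : Equiv.Perm (X n)) (hg : (supp g).Finite), hg.toFinset.card = k →
      g ∈ Cl n := by
  intro k
  induction k using Nat.strong_induction_on with
  | _ k ih =>
    intro g hg hcard
    rcases Set.eq_empty_or_nonempty (supp g) with he | ⟨x, hx⟩
    · have hg1 : g = 1 := by
        apply Equiv.ext
        intro p
        by_contra hne
        have : p ∈ supp g := hne
        rw [he] at this
        exact this
      rw [hg1]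
      exact one_mem _
    · have hgx : g x ≠ x := hx
      set g' := Equiv.swap x (g x) * g with hg'def
      have hfix : ∀ y, y ∉ supp g \ {x} → g' y = y := by
        intro y hy
        rcases eq_or_ne y x with rfl | hyx
        · simp [hg'def, Equiv.Perm.mul_apply]
        · have hgy : g y = y := by
            by_contra hne
            exact hy ⟨hne, hyx⟩
          have hygx : y ≠ g x := by
            rintro rfl
            exact hgx (g.injective hgy)
          simp [hg'def, Equiv.Perm.mul_apply, hgy,
            Equiv.swap_apply_of_ne_of_ne hyx hygx]
      have hsub : supp g' ⊆ supp g \ {x} := by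
        intro y hy
        by_contra hmem
        exact hy (hfix y hmem)
      have hfin' : (supp g').Finite := hg.subset (hsub.trans Set.diff_subset)
      have hss : hfin'.toFinset ⊆ hg.toFinset := by
        intro y hy
        rw [Set.Finite.mem_toFinset] at hy ⊢
        exact (hsub hy).1
      have hxnot : x ∉ hfin'.toFinset := by
        rw [Set.Finite.mem_toFinset]
        intro hmem
        exact hmem (hfix x (by simp))
      have hlt : hfin'.toFinset.card < k := by
        rw [← hcard]
        exact Finset.card_lt_card
          ⟨hss, fun hall => hxnot (hall (hg.mem_toFinset.mpr hx))⟩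
      have hg'mem : g' ∈ Cl n := ih _ hlt g' hfin' rfl
      have hdecomp : g = Equiv.swap x (g x) * g' := by
        rw [hg'def, ← mul_assoc, Equiv.swap_mul_self, one_mul]
      rw [hdecomp]
      exact mul_mem (swap_mem hn (Ne.symm hgx)) hg'mem

lemma main_red (hn : 3 ≤ n) :
    ∀ (N : ℕ) (g : Equiv.Perm (X n)) (t : Fin n → ℤ) (z : ℕ),
      EvTransFrom g t z → (∑ i ∈ Finset.univ.erase (0 : Fin n), (t i).natAbs) = N →
      g ∈ Cl n := by
  intro N
  induction N using Nat.strong_induction_on with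
  | _ N ih =>
    intro g t z hev hsum
    by_cases h0 : ∀ j : Fin n, j ≠ 0 → t j = 0
    · have ht0 : t 0 = 0 := v_zero_of_others_zero hev h0
      have hall : ∀ i, t i = 0 := by
        intro i
        by_cases hi : i = 0
        · rw [hi]; exact ht0
        · exact h0 i hi
      have hfin : (supp g).Finite := by
        apply Set.Finite.subset
          ((Finset.univ ×ˢ Finset.range z : Finset (X n)).finite_toSet)
        rintro ⟨i, m⟩ hm
        simp only [Finset.coe_product, Set.mem_prod, Finset.coe_univ, Set.mem_univ,
          Finset.coe_range, Set.mem_Iio, true_and]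
        by_contra hge
        push_neg at hge
        obtain ⟨e1, e2⟩ := hev i m hge
        rw [hall i] at e2
        exact hm (Prod.ext e1 (by omega))
      exact fsym_mem hn _ g hfin rfl
    · push_neg at h0
      obtain ⟨j, hj, htj⟩ := h0
      have hjmem : j ∈ Finset.univ.erase (0 : Fin n) :=
        Finset.mem_erase.mpr ⟨hj, Finset.mem_univ j⟩
      have hNpos : 1 ≤ N := by
        have hle : (t j).natAbs ≤ ∑ i ∈ Finset.univ.erase (0 : Fin n), (t i).natAbs :=
          Finset.single_le_sum (f := fun i => (t i).natAbs) (fun i _ => Nat.zero_le _) hjmem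
        omega
      have hesum : ∀ t' : Fin n → ℤ, (∀ i, i ≠ 0 → i ≠ j → t' i = t i) →
          (t' j).natAbs = (t j).natAbs - 1 →
          (∑ i ∈ Finset.univ.erase (0 : Fin n), (t' i).natAbs) = N - 1 := by
        intro t' hsame habs
        have e1 : ∑ i ∈ Finset.univ.erase (0 : Fin n), (t i).natAbs
            = (t j).natAbs + ∑ i ∈ (Finset.univ.erase (0 : Fin n)).erase j, (t i).natAbs :=
          (Finset.add_sum_erase _ _ hjmem).symm
        have e2 : ∑ i ∈ Finset.univ.erase (0 : Fin n), (t' i).natAbs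
            = (t' j).natAbs + ∑ i ∈ (Finset.univ.erase (0 : Fin n)).erase j, (t' i).natAbs :=
          (Finset.add_sum_erase _ _ hjmem).symm
        have e3 : ∑ i ∈ (Finset.univ.erase (0 : Fin n)).erase j, (t' i).natAbs
            = ∑ i ∈ (Finset.univ.erase (0 : Fin n)).erase j, (t i).natAbs := by
          apply Finset.sum_congr rfl
          intro i hi
          have hij : i ≠ j := (Finset.mem_erase.mp hi).1
          have hi0 : i ≠ 0 := (Finset.mem_erase.mp (Finset.mem_erase.mp hi).2).1
          rw [hsame i hi0 hij]
        rw [e2, e3, habs]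
        omega
      rcases htj.lt_or_gt with hneg | hpos
      · -- t j < 0 : multiply by (gen j)⁻¹
        have hev' := evt_mul hev (evt_inv (evt_gen j hj))
        have ht'j : (t + -(vec j)) j = t j + 1 := by
          simp [vec, hj]
        have hsame : ∀ i, i ≠ 0 → i ≠ j → (t + -(vec j)) i = t i := by
          intro i hi0 hij
          simp [vec, hi0, hij]
        have habs : ((t + -(vec j)) j).natAbs = (t j).natAbs - 1 := by
          rw [ht'j]; omega
        have hg' := ih (N - 1) (by omega) _ _ _ hev' (hesum _ hsame habs)
        have hdecomp : g = (g * (gen j hj)⁻¹) * gen j hj := by group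
        rw [hdecomp]
        exact mul_mem hg' (gen_mem j hj)
      · -- 0 < t j : multiply by gen j
        have hev' := evt_mul hev (evt_gen j hj)
        have ht'j : (t + vec j) j = t j + -1 := by
          simp [vec, hj]
        have hsame : ∀ i, i ≠ 0 → i ≠ j → (t + vec j) i = t i := by
          intro i hi0 hij
          simp [vec, hi0, hij]
        have habs : ((t + vec j) j).natAbs = (t j).natAbs - 1 := by
          rw [ht'j]; omega
        have hg' := ih (N - 1) (by omega) _ _ _ hev' (hesum _ hsame habs)
        have hdecomp : g = (g * gen j hj) * (gen j hj)⁻¹ := by group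
        rw [hdecomp]
        exact mul_mem hg' (inv_mem (gen_mem j hj))

end Proof

end HoughtonPaper

open HoughtonPaper

theorem statement19 (n : ℕ) [NeZero n] (hn : 3 ≤ n) (g : Equiv.Perm (X n)) :
    InH g ↔ g ∈ Subgroup.closure {h : Equiv.Perm (X n) |
      ∃ (i : Fin n) (hi : i ≠ 0), h = gen i hi} := by
  constructor
  · rintro ⟨t, z, hev⟩
    exact main_red hn _ g t z hev rfl
  · intro hg
    have hle : Subgroup.closure {h : Equiv.Perm (X n) |
        ∃ (i : Fin n) (hi : i ≠ 0), h = gen i hi} ≤ Hsub n := by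
      rw [Subgroup.closure_le]
      rintro h ⟨i, hi, rfl⟩
      exact ⟨vec i, 1, evt_gen i hi⟩
    exact hle hg
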